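/- Let K be a field, a, b positive integers, A a b×a matrix and M an a×b matrix over K with I_a − M·A invertible. For X = [[I_a],[0]], Y = [[I_a],[A]], U = [I_a, 0], V = [I_a, −M] and W = X·(U·X)⁻¹·(U·Y)·(V·Y)⁻¹·V, the trace of W satisfies: trace W = a + trace(M·A) + trace((M·A)²·(I_a − M·A)⁻¹). In particular, up to terms of order higher than two in the entries of A and M, trace W = a + trace(M·A), i.e. the quadratic form g = ω_i^α ω_α^i is the second-order principal part of trace W − (m+1) (this is the algebraic content of Theorem 1). -/

import Mathlib

open Matrix

/-- For the cross-ratio `W = X (UX)⁻¹ (UY) (VY)⁻¹ V` with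
`X = [[I],[0]]`, `Y = [[I],[A]]`, `U = [I, 0]`, `V = [I, -M]` and `I - MA` invertible,
`trace W = a + trace (MA) + trace ((MA)² (I - MA)⁻¹)`; the first two terms give the
principal part up to second order, so the quadratic form `g = trace (MA)` is the
second-order principal part of `trace W - (m+1)` (Theorem 1). -/
theorem trace_cross_ratio (K : Type*) [Field K] (a b : ℕ) (ha : 0 < a) (hb : 0 < b)
    (A : Matrix (Fin b) (Fin a) K) (M : Matrix (Fin a) (Fin b) K)
    (h : IsUnit (1 - M * A)) :
    letI X : Matrix (Fin a ⊕ Fin b) (Fin a) K := Matrix.fromRows 1 0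
    letI Y : Matrix (Fin a ⊕ Fin b) (Fin a) K := Matrix.fromRows 1 A
    letI U : Matrix (Fin a) (Fin a ⊕ Fin b) K := Matrix.fromCols 1 0
    letI V : Matrix (Fin a) (Fin a ⊕ Fin b) K := Matrix.fromCols 1 (-M)
    Matrix.trace (X * (U * X)⁻¹ * (U * Y) * (V * Y)⁻¹ * V) =
      (a : K) + Matrix.trace (M * A) + Matrix.trace ((M * A) ^ 2 * (1 - M * A)⁻¹) := by
  set X : Matrix (Fin a ⊕ Fin b) (Fin a) K := Matrix.fromRows 1 0 with hX
  set Y : Matrix (Fin a ⊕ Fin b) (Fin a) K := Matrix.fromRows 1 A with hY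
  set U : Matrix (Fin a) (Fin a ⊕ Fin b) K := Matrix.fromCols 1 0 with hU
  set V : Matrix (Fin a) (Fin a ⊕ Fin b) K := Matrix.fromCols 1 (-M) with hV
  set N := M * A with hN
  have hUX : U * X = 1 := by
    simp [hX, hU, Matrix.fromCols_mul_fromRows]
  have hUY : U * Y = 1 := by
    simp [hY, hU, Matrix.fromCols_mul_fromRows]
  have hVY : V * Y = 1 - N := by
    simp [hY, hV, Matrix.fromCols_mul_fromRows, hN, sub_eq_add_neg]
  have hVX : V * X = 1 := by
    simp [hX, hV, Matrix.fromCols_mul_fromRows]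
  have hdet : IsUnit (1 - N).det := (Matrix.isUnit_iff_isUnit_det _).mp h
  have hinv : (1 - N) * (1 - N)⁻¹ = 1 := Matrix.mul_nonsing_inv _ hdet
  have hone : ((1 + N) * (1 - N) + N ^ 2 : Matrix (Fin a) (Fin a) K) = 1 := by
    noncomm_ring
  have key : (1 - N)⁻¹ = 1 + N + N ^ 2 * (1 - N)⁻¹ := by
    calc (1 - N)⁻¹ = ((1 + N) * (1 - N) + N ^ 2) * (1 - N)⁻¹ := by rw [hone, one_mul]
    _ = (1 + N) * ((1 - N) * (1 - N)⁻¹) + N ^ 2 * (1 - N)⁻¹ := by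
        rw [Matrix.add_mul, Matrix.mul_assoc]
    _ = 1 + N + N ^ 2 * (1 - N)⁻¹ := by rw [hinv, Matrix.mul_one]
  rw [hUX, hUY, hVY, inv_one, Matrix.mul_one, Matrix.mul_one,
    Matrix.trace_mul_cycle, hVX, one_mul]
  conv_lhs => rw [key]
  simp [Matrix.trace_add, Matrix.trace_one, add_assoc]
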